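/- Let f : E → ℝ be a differentiable strictly convex function on a finite-dimensional real inner product space E. Then the image of the gradient map ∇f : E → E is an open convex subset of E. -/

import Mathlib

open Set InnerProductSpace

local notation "⟪" x ", " y "⟫" => @inner ℝ _ _ x y

section Helpers

variable {E : Type*} [NormedAddCommGroup E] [InnerProductSpace ℝ E]

lemma grad_inner' {f : E → ℝ} [CompleteSpace E] (x v : E) :
    ⟪gradient f x, v⟫ = fderiv ℝ f x v := by
  rw [gradient, toDual_symm_apply]

/-- Support inequality for differentiable convex functions. -/
lemma support_ineq [FiniteDimensional ℝ E] {f : E → ℝ} (hconv : ConvexOn ℝ univ f)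
    (hdiff : Differentiable ℝ f) (x y : E) :
    f x + ⟪gradient f x, y - x⟫ ≤ f y := by
  set v := y - x with hv
  set g : ℝ → ℝ := fun t => f (t • v + x) with hg
  have hg_conv : ConvexOn ℝ univ g := by
    have h := hconv.comp_affineMap (AffineMap.lineMap x y)
    have heq : f ∘ (AffineMap.lineMap x y) = g := by
      funext t
      simp [g, AffineMap.lineMap_apply, hv]
    rw [heq, preimage_univ] at h
    exact h
  have hgd : ∀ t : ℝ, HasDerivAt g (fderiv ℝ f (t • v + x) v) t := by
    intro t
    have hline : HasDerivAt (fun t : ℝ => t • v + x) v t := by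
      simpa using ((hasDerivAt_id t).smul_const v).add_const x
    exact (hdiff (t • v + x)).hasFDerivAt.comp_hasDerivAt t hline
  have hslope := hg_conv.deriv_le_slope (mem_univ (0:ℝ)) (mem_univ (1:ℝ)) one_pos
    ((hgd 0).differentiableAt)
  rw [(hgd 0).deriv, slope_def_field] at hslope
  have h0 : (0:ℝ) • v + x = x := by simp
  have h1 : (1:ℝ) • v + x = y := by simp [hv]
  rw [h0] at hslope
  have hg0 : g 0 = f x := by simp [g]
  have hg1 : g 1 = f y := by simp [g, hv]
  rw [grad_inner']
  rw [hg0, hg1] at hslope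
  have : fderiv ℝ f x v ≤ f y - f x := by
    have := hslope
    simpa using this
  linarith

/-- A point with gradient `y` minimizes `f - ⟪y, ·⟫`. -/
lemma isMin_of_grad [FiniteDimensional ℝ E] {f : E → ℝ} (hconv : ConvexOn ℝ univ f)
    (hdiff : Differentiable ℝ f) {z y : E} (hz : gradient f z = y) (x : E) :
    f z - ⟪y, z⟫ ≤ f x - ⟪y, x⟫ := by
  have h := support_ineq hconv hdiff z x
  rw [hz, inner_sub_right] at h
  linarith

lemma strict_min [FiniteDimensional ℝ E] {f : E → ℝ} (hconv : StrictConvexOn ℝ univ f)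
    (hdiff : Differentiable ℝ f) {z y x : E} (hz : gradient f z = y) (hx : x ≠ z) :
    f z - ⟪y, z⟫ < f x - ⟪y, x⟫ := by
  have hm := hconv.2 (mem_univ z) (mem_univ x) (Ne.symm hx)
    (by norm_num : (0:ℝ) < 1/2) (by norm_num : (0:ℝ) < 1/2) (by norm_num)
  have hs := support_ineq hconv.convexOn hdiff z ((1/2 : ℝ) • z + (1/2 : ℝ) • x)
  rw [hz] at hs
  have hin : ⟪y, ((1/2 : ℝ) • z + (1/2 : ℝ) • x) - z⟫
      = (1/2) * ⟪y, x⟫ - (1/2) * ⟪y, z⟫ := by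
    rw [inner_sub_right, inner_add_right, inner_smul_right, inner_smul_right]
    ring
  rw [hin] at hs
  simp only [smul_eq_mul] at hm
  linarith

lemma phi_convex {f : E → ℝ} (hconv : ConvexOn ℝ univ f) (y : E) :
    ConvexOn ℝ univ (fun x => f x - ⟪y, x⟫) := by
  refine ⟨convex_univ, fun u hu v hv a b ha hb hab => ?_⟩
  have h := hconv.2 hu hv ha hb hab
  simp only [smul_eq_mul] at h
  simp only [smul_eq_mul, inner_add_right, inner_smul_right]
  nlinarith

lemma growth {h : E → ℝ} (hc : ConvexOn ℝ univ h) {x0 : E} {δ : ℝ}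
    (hsph : ∀ u : E, ‖u - x0‖ = 1 → h x0 + δ ≤ h u) {x : E} (hx : 1 ≤ ‖x - x0‖) :
    h x0 + ‖x - x0‖ * δ ≤ h x := by
  set R := ‖x - x0‖ with hR
  have hRpos : 0 < R := lt_of_lt_of_le one_pos hx
  set a : ℝ := R⁻¹ with ha
  have hapos : 0 < a := inv_pos.mpr hRpos
  have hRa : R * a = 1 := mul_inv_cancel₀ (ne_of_gt hRpos)
  have ha1 : a ≤ 1 := by
    rw [ha]
    exact inv_le_one_of_one_le₀ hx
  have hu : ‖(a • (x - x0) + x0) - x0‖ = 1 := by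
    simp [norm_smul, abs_of_pos hapos, ← hR]
    rw [mul_comm] at hRa
    exact hRa
  have hcomb := hc.2 (mem_univ x0) (mem_univ x) (by linarith : (0:ℝ) ≤ 1 - a)
    (le_of_lt hapos) (by ring)
  have heq : (1 - a) • x0 + a • x = a • (x - x0) + x0 := by
    rw [smul_sub, sub_smul, one_smul]
    abel
  rw [heq] at hcomb
  have h1 := hsph _ hu
  have hd : δ ≤ a * (h x - h x0) := by
    simp only [smul_eq_mul] at hcomb
    nlinarith
  have : R * δ ≤ R * (a * (h x - h x0)) := by
    exact mul_le_mul_of_nonneg_left hd (le_of_lt hRpos)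
  rw [← mul_assoc, hRa, one_mul] at this
  linarith

lemma mem_range_of_sphere [FiniteDimensional ℝ E] {f : E → ℝ}
    (hdiff : Differentiable ℝ f) {y x0 : E} {R : ℝ} (hRpos : 0 < R)
    (hs : ∀ x : E, ‖x - x0‖ = R → f x0 - ⟪y, x0⟫ < f x - ⟪y, x⟫) :
    y ∈ Set.range (gradient f) := by
  set φ : E → ℝ := fun x => f x - ⟪y, x⟫ with hφ
  have hφc : Continuous φ := hdiff.continuous.sub (continuous_const.inner continuous_id)
  obtain ⟨z, hzK, hzmin⟩ := (isCompact_closedBall x0 R).exists_isMinOn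
    ⟨x0, by simp [hRpos.le]⟩ hφc.continuousOn
  have hx0K : x0 ∈ Metric.closedBall x0 R := by simp [hRpos.le]
  have hzx0 : φ z ≤ φ x0 := hzmin hx0K
  have hzlt : ‖z - x0‖ < R := by
    rcases lt_or_eq_of_le ((Metric.mem_closedBall.mp hzK).trans_eq rfl) with h | h
    · rwa [dist_eq_norm] at h
    · exfalso
      have := hs z (by rwa [← dist_eq_norm])
      exact absurd hzx0 (not_le.mpr this)
  have hloc : IsLocalMin φ z := by
    apply hzmin.isLocalMin
    apply Filter.mem_of_superset (Metric.isOpen_ball.mem_nhds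
      (by rwa [Metric.mem_ball, dist_eq_norm]))
    exact Metric.ball_subset_closedBall
  have hF : HasFDerivAt φ (fderiv ℝ f z - innerSL ℝ y) z := by
    have h1 : HasFDerivAt f (fderiv ℝ f z) z := (hdiff z).hasFDerivAt
    have h2 : HasFDerivAt (fun x : E => ⟪y, x⟫) (innerSL ℝ y) z := by
      simpa using (innerSL ℝ y).hasFDerivAt (x := z)
    exact h1.sub h2
  have h0 := hloc.hasFDerivAt_eq_zero hF
  refine ⟨z, ?_⟩
  have hfd : fderiv ℝ f z = innerSL ℝ y := by rwa [sub_eq_zero] at h0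
  have hdual : innerSL ℝ y = (toDual ℝ E) y := by
    ext v
    simp [toDual_apply_apply]
  rw [gradient, hfd, hdual, LinearIsometryEquiv.symm_apply_apply]

lemma sphere_gap [FiniteDimensional ℝ E] [Nontrivial E] {f : E → ℝ}
    (hconv : StrictConvexOn ℝ univ f) (hdiff : Differentiable ℝ f) (x1 : E) :
    ∃ δ > 0, ∀ u : E, ‖u - x1‖ = 1 →
      (f x1 - ⟪gradient f x1, x1⟫) + δ ≤ f u - ⟪gradient f x1, u⟫ := by
  set y := gradient f x1 with hy
  have hsph_ne : (Metric.sphere x1 (1:ℝ)).Nonempty :=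
    NormedSpace.sphere_nonempty.mpr zero_le_one
  have hcpt : IsCompact (Metric.sphere x1 (1:ℝ)) := isCompact_sphere _ _
  have hφc : Continuous fun x : E => f x - ⟪y, x⟫ :=
    hdiff.continuous.sub (continuous_const.inner continuous_id)
  obtain ⟨u0, hu0, hmin⟩ := hcpt.exists_isMinOn hsph_ne hφc.continuousOn
  have hu0ne : u0 ≠ x1 := by
    intro h
    rw [Metric.mem_sphere, h] at hu0
    simp at hu0
  refine ⟨(f u0 - ⟪y, u0⟫) - (f x1 - ⟪y, x1⟫), ?_, fun u hu => ?_⟩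
  · have := strict_min hconv hdiff hy.symm hu0ne
    linarith
  · have hmem : u ∈ Metric.sphere x1 (1:ℝ) := by rwa [Metric.mem_sphere, dist_eq_norm]
    have h3 : f u0 - ⟪y, u0⟫ ≤ f u - ⟪y, u⟫ := hmin hmem
    linarith

end Helpers

/-- The image of the gradient of a differentiable strictly convex function on a
finite-dimensional real inner product space is an open convex set. -/
theorem stmt_0 {E : Type*} [NormedAddCommGroup E] [InnerProductSpace ℝ E]
    [FiniteDimensional ℝ E] (f : E → ℝ) (hdiff : Differentiable ℝ f)
    (hconv : StrictConvexOn ℝ Set.univ f) :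
    IsOpen (Set.range (gradient f)) ∧ Convex ℝ (Set.range (gradient f)) := by
  rcases subsingleton_or_nontrivial E with hE | hE
  · have : Set.range (gradient f) = Set.univ := by
      apply Set.eq_univ_of_forall
      intro y
      exact ⟨0, Subsingleton.elim _ _⟩
    rw [this]
    exact ⟨isOpen_univ, convex_univ⟩
  constructor
  · rw [Metric.isOpen_iff]
    rintro y0 ⟨x0, rfl⟩
    obtain ⟨δ, hδpos, hδ⟩ := sphere_gap hconv hdiff x0
    set y0 := gradient f x0 with hy0
    refine ⟨δ / 2, by linarith, fun y hy => ?_⟩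
    rw [Metric.mem_ball, dist_eq_norm] at hy
    apply mem_range_of_sphere hdiff one_pos
    intro x hx
    have h1 := hδ x hx
    have h2 : ⟪y - y0, x - x0⟫ ≤ ‖y - y0‖ * ‖x - x0‖ := real_inner_le_norm _ _
    rw [hx, mul_one] at h2
    have hdec1 : ⟪y, x⟫ = ⟪y0, x⟫ + ⟪y - y0, x⟫ := by
      rw [inner_sub_left]; ring
    have hdec2 : ⟪y, x0⟫ = ⟪y0, x0⟫ + ⟪y - y0, x0⟫ := by
      rw [inner_sub_left]; ring
    have hdec3 : ⟪y - y0, x - x0⟫ = ⟪y - y0, x⟫ - ⟪y - y0, x0⟫ := inner_sub_right _ _ _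
    rw [hdec1, hdec2]
    linarith
  · rintro y1 ⟨x1, rfl⟩ y2 ⟨x2, rfl⟩ a b ha hb hab
    set Y1 := gradient f x1 with hY1
    set Y2 := gradient f x2 with hY2
    rcases eq_or_lt_of_le ha with ha0 | hapos
    · have : b = 1 := by linarith
      simp [← ha0, this]
      exact ⟨x2, rfl⟩
    rcases eq_or_lt_of_le hb with hb0 | hbpos
    · have : a = 1 := by linarith
      simp [← hb0, this]
      exact ⟨x1, rfl⟩
    have hb' : b = 1 - a := by linarith
    subst hb'
    set y := a • Y1 + (1 - a) • Y2 with hy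
    obtain ⟨δ1, hδ1pos, hδ1⟩ := sphere_gap hconv hdiff x1
    -- φ1 := f - ⟪Y1,·⟫, φ2 := f - ⟪Y2,·⟫, φy = a φ1 + b φ2
    have hmin2 : ∀ x : E, f x2 - ⟪Y2, x2⟫ ≤ f x - ⟪Y2, x⟫ :=
      isMin_of_grad hconv.convexOn hdiff hY2.symm
    set C : ℝ := (1 - a) * ((f x1 - ⟪Y2, x1⟫) - (f x2 - ⟪Y2, x2⟫)) with hC
    have hCnn : 0 ≤ C := mul_nonneg hb (by linarith [hmin2 x1])
    set R : ℝ := max 1 ((C + 1) / (a * δ1)) with hRdef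
    have hR1 : 1 ≤ R := le_max_left _ _
    have hRpos : 0 < R := lt_of_lt_of_le one_pos hR1
    have haδ : 0 < a * δ1 := mul_pos hapos hδ1pos
    have hRbig : C + 1 ≤ a * δ1 * R := by
      have : (C + 1) / (a * δ1) ≤ R := le_max_right _ _
      calc C + 1 = a * δ1 * ((C + 1) / (a * δ1)) := by field_simp
        _ ≤ a * δ1 * R := by
            exact mul_le_mul_of_nonneg_left this (le_of_lt haδ)
    apply mem_range_of_sphere hdiff hRpos
    intro x hx
    -- growth for φ1
    have hgrow := growth (phi_convex hconv.convexOn Y1) hδ1 (hx ▸ hR1)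
    rw [hx] at hgrow
    have h2 := hmin2 x
    -- decompose inner products wrt y
    have hdx : ∀ v : E, ⟪y, v⟫ = a * ⟪Y1, v⟫ + (1 - a) * ⟪Y2, v⟫ := by
      intro v
      rw [hy, inner_add_left, inner_smul_left]
      simp [inner_smul_left]
    rw [hdx x, hdx x1]
    have hA := mul_le_mul_of_nonneg_left hgrow (le_of_lt hapos)
    have hB := mul_le_mul_of_nonneg_left h2 hb
    nlinarith [hA, hB, hRbig, hC]
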